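/- arXiv:2310.06455 — 3 statements merged into one kernel-verified Lean document; each statement's English description precedes it below -/
import Mathlib

section
/- Let X and Y be Banach spaces with X reflexive, and let f : D(f) ⊆ X → Y be a bounded continuous (single-valued) mapping whose graph is weakly closed (closed in the product of the weak topologies of X and Y), and such that for each bounded subset M ⊆ R(f) of Y the preimage f⁻¹(M) is a bounded subset of X. Then f is a weakly closed mapping, i.e. the image under f of every bounded weakly closed subset of D(f) is weakly closed in Y. -/
open Metric Set NormedSpace Topology

/-- A real normed space is reflexive if the canonical embedding into its double dual is
surjective. -/
def IsReflexiveSpace (X : Type*) [NormedAddCommGroup X] [NormedSpace ℝ X] : Prop :=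
  Function.Surjective (inclusionInDoubleDual ℝ X)

/-- A subset of a normed space is weakly closed if its image in the weak space is closed. -/
def IsWeaklyClosed {Y : Type*} [NormedAddCommGroup Y] [NormedSpace ℝ Y] (S : Set Y) : Prop :=
  IsClosed ((toWeakSpace ℝ Y) '' S)

lemma isClosed_snd_image_of_compact_fst {A B : Type*} [TopologicalSpace A]
    [TopologicalSpace B] {K : Set A} (hK : IsCompact K) {C : Set (A × B)}
    (hC : IsClosed C) (hsub : ∀ p ∈ C, p.1 ∈ K) : IsClosed (Prod.snd '' C) := by
  haveI : CompactSpace K := isCompact_iff_compactSpace.mp hK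
  have hcont : Continuous (fun p : K × B => ((p.1 : A), p.2)) :=
    (continuous_subtype_val.comp continuous_fst).prodMk continuous_snd
  have h1 : IsClosed ((fun p : K × B => ((p.1 : A), p.2)) ⁻¹' C) := hC.preimage hcont
  have h2 := isClosedMap_snd_of_compactSpace _ h1
  convert h2 using 1
  ext b
  constructor
  · rintro ⟨⟨a, b'⟩, hp, rfl⟩
    exact ⟨(⟨a, hsub _ hp⟩, b'), hp, rfl⟩
  · rintro ⟨⟨a, b'⟩, hp, rfl⟩
    exact ⟨((a : A), b'), hp, rfl⟩

lemma isCompact_weak_closedBall {X : Type*} [NormedAddCommGroup X] [NormedSpace ℝ X]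
    (hXrefl : IsReflexiveSpace X) (r : ℝ) :
    IsCompact ((toWeakSpace ℝ X) '' closedBall (0 : X) r) := by
  set e := LinearIsometryEquiv.ofSurjective (inclusionInDoubleDualLi ℝ (E := X)) hXrefl with he
  have gcont : Continuous fun x : WeakDual ℝ (StrongDual ℝ X) =>
      (toWeakSpace ℝ X) (e.symm (WeakDual.toStrongDual x)) := by
    apply WeakBilin.continuous_of_continuous_eval
    intro y
    have hxy : (fun x : WeakDual ℝ (StrongDual ℝ X) =>
        (topDualPairing ℝ X).flip (toWeakSpace ℝ X (e.symm (WeakDual.toStrongDual x))) y)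
        = fun x => x y := by
      funext x
      show y (e.symm x) = x y
      conv_rhs => rw [← e.apply_symm_apply x]
      rfl
    rw [hxy]
    exact WeakDual.eval_continuous y
  have hcomp := (WeakDual.isCompact_closedBall (𝕜 := ℝ) (0 : StrongDual ℝ (StrongDual ℝ X)) r).image gcont
  convert hcomp using 1
  ext b
  simp only [mem_image, mem_preimage, mem_closedBall, dist_zero_right]
  constructor
  · rintro ⟨x, hx, rfl⟩
    exact ⟨e x, (e.norm_map x).trans_le hx, congrArg (toWeakSpace ℝ X) (e.symm_apply_apply x)⟩
  · rintro ⟨x, hx, rfl⟩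
    exact ⟨e.symm x, (e.symm.norm_map x).trans_le hx, rfl⟩

/-- **Lemma 3.**  Let `X` be reflexive and `f : D(f) ⊆ X → Y` a bounded continuous mapping
whose graph is closed in the product of the weak topologies, such that preimages of bounded
subsets of the range are bounded.  Then `f` is weakly closed: the image of every bounded
weakly closed subset of `D(f)` is weakly closed. -/
theorem weaklyClosed_mapping_of_weaklyClosed_graph
    {X Y : Type*} [NormedAddCommGroup X] [NormedSpace ℝ X] [CompleteSpace X]
    [NormedAddCommGroup Y] [NormedSpace ℝ Y] [CompleteSpace Y]
    (hXrefl : IsReflexiveSpace X)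
    (f : X → Y) (Df : Set X)
    (hcont : ContinuousOn f Df)
    (hbdd : ∀ S ⊆ Df, Bornology.IsBounded S → Bornology.IsBounded (f '' S))
    -- the graph of `f` is closed in the product of the weak topologies
    (hgraph : IsClosed ((fun p : X × Y => ((toWeakSpace ℝ X) p.1, (toWeakSpace ℝ Y) p.2)) ''
      {p : X × Y | p.1 ∈ Df ∧ p.2 = f p.1}))
    -- preimages of bounded subsets of the range are bounded
    (hpre : ∀ M ⊆ f '' Df, Bornology.IsBounded M →
      Bornology.IsBounded {x ∈ Df | f x ∈ M}) :
    ∀ S ⊆ Df, Bornology.IsBounded S → IsWeaklyClosed S → IsWeaklyClosed (f '' S) := by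
  intro S hSDf hSbdd hScl
  obtain ⟨r, hr⟩ := hSbdd.subset_closedBall 0
  have hW : IsCompact ((toWeakSpace ℝ X) '' S) :=
    (isCompact_weak_closedBall hXrefl r).of_isClosed_subset hScl (image_mono hr)
  set G := ((fun p : X × Y => ((toWeakSpace ℝ X) p.1, (toWeakSpace ℝ Y) p.2)) ''
      {p : X × Y | p.1 ∈ Df ∧ p.2 = f p.1}) with hG
  set C := G ∩ (((toWeakSpace ℝ X) '' S) ×ˢ (univ : Set (WeakSpace ℝ Y))) with hC
  have hCcl : IsClosed C := hgraph.inter (hScl.prod isClosed_univ)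
  have hkey : IsClosed (Prod.snd '' C) :=
    isClosed_snd_image_of_compact_fst hW hCcl (fun p hp => hp.2.1)
  have heq : (toWeakSpace ℝ Y) '' (f '' S) = Prod.snd '' C := by
    ext b
    constructor
    · rintro ⟨y, ⟨x, hxS, rfl⟩, rfl⟩
      exact ⟨((toWeakSpace ℝ X) x, (toWeakSpace ℝ Y) (f x)),
        ⟨⟨(x, f x), ⟨hSDf hxS, rfl⟩, rfl⟩, ⟨mem_image_of_mem _ hxS, trivial⟩⟩, rfl⟩
    · rintro ⟨⟨a, b⟩, ⟨⟨⟨x, y⟩, ⟨hxDf, hy⟩, hpq⟩, ⟨haS, -⟩⟩, rfl⟩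
      simp only at hy hxDf hpq
      subst hy
      obtain ⟨x', hx'S, hx'⟩ := haS
      have hax : (toWeakSpace ℝ X) x = a := congrArg Prod.fst hpq
      have hx'x : x' = x := (toWeakSpace ℝ X).injective (by rw [hx', hax])
      have hb : (toWeakSpace ℝ Y) (f x) = b := congrArg Prod.snd hpq
      exact ⟨f x, ⟨x, hx'x ▸ hx'S, rfl⟩, hb⟩
  rw [IsWeaklyClosed, heq]
  exact hkey
end

section
/- Let X and Y be reflexive Banach spaces and let f : D(f) ⊆ X → Y be a bounded continuous single-valued mapping. Assume that for x₀ ∈ D(f) there exists a continuous mapping f₀ : D(f) ⊆ X → Y satisfying, on a neighborhood U_{ε₀}(x₀) ⊂ D(f): (iv) f₀(U_{ε₀}(x₀)) is a bodily subset of Y, f₀(x₀) = f(x₀), and f₀(V(x₀)) = B_r^Y(f₀(x₀)) for some neighborhood V(x₀) ⊆ U_{ε₀}(x₀), and the inverse multivalued mapping f₀⁻¹ : B_r^Y(f₀(x₀)) → X is lower or upper semicontinuous; (v) there is a nondecreasing continuous function k : ℝ₊ → ℝ₊ with k(0) = 0 such that ‖f(x₁) − f(x₂) − f₀(x₁) +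 f₀(x₂)‖_Y ≤ k(‖f₀(x₁) − f₀(x₂)‖_Y) for all x₁, x₂ ∈ V(x₀), and the m₀-fold iterate satisfies k^{m₀}(τ) ≤ στ for some m₀ ≥ 1 and 0 < σ < 1. Then there is a number δ = δ(k(ε₀)) ∈ (0, 1) such that for every r₁ ∈ (0, r(1 − δ)) the closed ball B_{r₁}^Y(f(x₀)) is contained in the image f(V(x₀)). -/
open Metric Set NormedSpace Topology

/-- A subset of a topological space is *bodily* if it is connected and has nonempty interior. -/
def IsBodily {Y : Type*} [TopologicalSpace Y] (M : Set Y) : Prop :=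
  IsConnected M ∧ (interior M).Nonempty

/-- Lower semicontinuity of a multivalued map on a set. -/
def MVLowerSemicontinuousOn {X Y : Type*} [TopologicalSpace X] [TopologicalSpace Y]
    (F : X → Set Y) (D : Set X) : Prop :=
  ∀ x ∈ D, ∀ V : Set Y, IsOpen V → (F x ∩ V).Nonempty →
    ∃ U ∈ nhds x, ∀ x' ∈ U ∩ D, (F x' ∩ V).Nonempty

/-- Upper semicontinuity of a multivalued map on a set. -/
def MVUpperSemicontinuousOn {X Y : Type*} [TopologicalSpace X] [TopologicalSpace Y]
    (F : X → Set Y) (D : Set X) : Prop :=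
  ∀ x ∈ D, ∀ V : Set Y, IsOpen V → F x ⊆ V →
    ∃ U ∈ nhds x, ∀ x' ∈ U ∩ D, F x' ⊆ V

/-- **Theorem 4 (local comparison).**  If a bounded continuous mapping `f` is locally comparable
near `x₀` with a continuous mapping `f₀` whose image of a neighborhood `V(x₀)` is a closed ball
`B_r(f₀(x₀))` and whose inverse is lower or upper semicontinuous, and condition (v) holds with a
contracting modulus `k`, then a ball `B_{r₁}(f(x₀))` is contained in `f(V(x₀))` for every
`r₁ ∈ (0, r(1 − δ))`. -/
theorem local_comparison_ball_in_image
    {X Y : Type*} [NormedAddCommGroup X] [NormedSpace ℝ X] [CompleteSpace X]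
    [NormedAddCommGroup Y] [NormedSpace ℝ Y] [CompleteSpace Y]
    (hXrefl : IsReflexiveSpace X) (hYrefl : IsReflexiveSpace Y)
    (f : X → Y) (Df : Set X)
    (hcont : ContinuousOn f Df)
    (hbdd : ∀ S ⊆ Df, Bornology.IsBounded S → Bornology.IsBounded (f '' S))
    (x₀ : X) (hx₀ : x₀ ∈ Df)
    (f₀ : X → Y) (hf₀cont : ContinuousOn f₀ Df)
    (ε₀ : ℝ) (hε₀ : 0 < ε₀) (hUD : ball x₀ ε₀ ⊆ Df)
    -- (iv)
    (hbodily : IsBodily (f₀ '' ball x₀ ε₀))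
    (hf₀x₀ : f₀ x₀ = f x₀)
    (V : Set X) (hVU : V ⊆ ball x₀ ε₀) (hVnhd : V ∈ nhds x₀)
    (r : ℝ) (hr : 0 < r) (hf₀V : f₀ '' V = closedBall (f₀ x₀) r)
    (hinv : MVLowerSemicontinuousOn (fun y => {x ∈ V | f₀ x = y}) (closedBall (f₀ x₀) r) ∨
            MVUpperSemicontinuousOn (fun y => {x ∈ V | f₀ x = y}) (closedBall (f₀ x₀) r))
    -- (v)
    (k : ℝ → ℝ) (hkc : Continuous k) (hkmono : Monotone k)
    (hknonneg : ∀ t, 0 ≤ k t) (hk0 : k 0 = 0)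
    (hcompare : ∀ x₁ ∈ V, ∀ x₂ ∈ V,
      ‖f x₁ - f x₂ - f₀ x₁ + f₀ x₂‖ ≤ k ‖f₀ x₁ - f₀ x₂‖)
    (m₀ : ℕ) (hm₀ : 1 ≤ m₀) (σ : ℝ) (hσ : σ ∈ Set.Ioo (0 : ℝ) 1)
    (hiter : ∀ τ ≥ (0 : ℝ), k^[m₀] τ ≤ σ * τ) :
    ∃ δ ∈ Set.Ioo (0 : ℝ) 1, ∀ r₁ ∈ Set.Ioo 0 (r * (1 - δ)),
      closedBall (f x₀) r₁ ⊆ f '' V := by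
  classical
  obtain ⟨hσ0, hσ1⟩ := hσ
  -- `k s < s` for positive `s`
  have hklt : ∀ t : ℝ, 0 < t → k t < t := by
    intro t ht
    by_contra hcon
    push_neg at hcon
    have hge : ∀ j : ℕ, t ≤ k^[j] t := by
      intro j
      induction j with
      | zero => simp
      | succ j ih =>
        rw [Function.iterate_succ_apply']
        exact le_trans hcon (hkmono ih)
    have h1 := hiter t ht.le
    have h2 := hge m₀
    nlinarith
  have hkle : ∀ s : ℝ, 0 ≤ s → k s ≤ s := by
    intro s hs
    rcases hs.eq_or_lt with h | h
    · simp [← h, hk0]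
    · exact (hklt s h).le
  have hkr : k r < r := hklt r hr
  set δ : ℝ := (k r / r + 1) / 2 with hδdef
  have hdivnn : 0 ≤ k r / r := div_nonneg (hknonneg r) hr.le
  have hdivlt : k r / r < 1 := (div_lt_one hr).mpr hkr
  have hδ0 : 0 < δ := by rw [hδdef]; linarith
  have hδ1 : δ < 1 := by rw [hδdef]; linarith
  have hkrδ : k r ≤ δ * r := by
    have h1 : k r / r ≤ δ := by rw [hδdef]; linarith
    calc k r = k r / r * r := by field_simp
      _ ≤ δ * r := mul_le_mul_of_nonneg_right h1 hr.le
  refine ⟨δ, ⟨hδ0, hδ1⟩, ?_⟩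
  rintro r₁ ⟨hr₁0, hr₁⟩ y hy
  rw [mem_closedBall_iff_norm] at hy
  have hy' : ‖y - f₀ x₀‖ ≤ r₁ := by rw [hf₀x₀]; exact hy
  have hx₀V : x₀ ∈ V := mem_of_mem_nhds hVnhd
  -- preimage selection
  have hpre : ∀ y' : Y, ‖y' - f₀ x₀‖ ≤ r → ∃ x ∈ V, f₀ x = y' := by
    intro y' h
    have hmem : y' ∈ f₀ '' V := by rw [hf₀V]; exact mem_closedBall_iff_norm.mpr h
    obtain ⟨x, hx1, hx2⟩ := hmem
    exact ⟨x, hx1, hx2⟩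
  let P : Y → X := fun y' => if h : ‖y' - f₀ x₀‖ ≤ r then (hpre y' h).choose else x₀
  have hPmem : ∀ y' (h : ‖y' - f₀ x₀‖ ≤ r), P y' ∈ V ∧ f₀ (P y') = y' := by
    intro y' h
    simp only [P, dif_pos h]
    exact ⟨(hpre y' h).choose_spec.1, (hpre y' h).choose_spec.2⟩
  -- the iteration
  let xs : ℕ → X := fun n => Nat.rec x₀ (fun _ xn => P (y - f xn + f₀ xn)) n
  have hxs0 : xs 0 = x₀ := rfl
  have hxsS : ∀ n, xs (n + 1) = P (y - f (xs n) + f₀ (xs n)) := fun n => rfl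
  have hrr : r₁ + k r ≤ r := by nlinarith
  have hstep : ∀ x' ∈ V, ‖f₀ x' - f₀ x₀‖ ≤ r →
      ‖(y - f x' + f₀ x') - f₀ x₀‖ ≤ r := by
    intro x' hx' hb
    have h1 := hcompare x' hx' x₀ hx₀V
    have h2 : k ‖f₀ x' - f₀ x₀‖ ≤ k r := hkmono hb
    have h3 : ‖(y - f x' + f₀ x') - f₀ x₀‖ ≤ ‖y - f₀ x₀‖ + ‖f x' - f x₀ - f₀ x' + f₀ x₀‖ := by
      have he : (y - f x' + f₀ x') - f₀ x₀
          = (y - f₀ x₀) - (f x' - f x₀ - f₀ x' + f₀ x₀) := by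
        rw [← hf₀x₀]; abel
      rw [he]
      exact norm_sub_le _ _
    linarith
  have hinvar : ∀ n, xs n ∈ V ∧ ‖f₀ (xs n) - f₀ x₀‖ ≤ r := by
    intro n
    induction n with
    | zero => exact ⟨hx₀V, by simp [hxs0, hr.le]⟩
    | succ n ih =>
      have hb := hstep (xs n) ih.1 ih.2
      have hP := hPmem _ hb
      rw [hxsS]
      exact ⟨hP.1, by rw [hP.2]; exact hb⟩
  have heq : ∀ n, f₀ (xs (n+1)) = y - f (xs n) + f₀ (xs n) := by
    intro n
    have hb := hstep (xs n) (hinvar n).1 (hinvar n).2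
    rw [hxsS]
    exact (hPmem _ hb).2
  -- successive differences
  set t : ℕ → ℝ := fun n => ‖f₀ (xs (n+1)) - f₀ (xs n)‖ with htdef
  have htnn : ∀ n, 0 ≤ t n := fun n => norm_nonneg _
  have ht_succ : ∀ n, t (n+1) ≤ k (t n) := by
    intro n
    have h1 := hcompare (xs (n+1)) (hinvar (n+1)).1 (xs n) (hinvar n).1
    have h2 : f₀ (xs (n+2)) - f₀ (xs (n+1))
        = -(f (xs (n+1)) - f (xs n) - f₀ (xs (n+1)) + f₀ (xs n)) := by
      rw [heq (n+1), heq n]; abel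
    have : t (n+1) = ‖f (xs (n+1)) - f (xs n) - f₀ (xs (n+1)) + f₀ (xs n)‖ := by
      rw [htdef]; simp only []
      rw [h2, norm_neg]
    rw [this]
    exact h1
  have ht_shift : ∀ n j, t (n + j) ≤ k^[j] (t n) := by
    intro n j
    induction j with
    | zero => simp
    | succ j ih =>
      calc t (n + (j+1)) = t ((n+j)+1) := rfl
        _ ≤ k (t (n+j)) := ht_succ _
        _ ≤ k (k^[j] (t n)) := hkmono ih
        _ = k^[j+1] (t n) := (Function.iterate_succ_apply' k j _).symm
  have hit : ∀ j (s : ℝ), 0 ≤ s → k^[j] s ≤ s ∧ 0 ≤ k^[j] s := by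
    intro j s hs
    induction j with
    | zero => simpa using hs
    | succ j ih =>
      rw [Function.iterate_succ_apply']
      exact ⟨le_trans (hkle _ ih.2) ih.1, hknonneg _⟩
  have ht0r : t 0 ≤ r := by
    have h1 := (hinvar 1).2
    rw [htdef]
    simpa [hxs0] using h1
  have htnr : ∀ n, t n ≤ r := by
    intro n
    have h1 : t n ≤ k^[n] (t 0) := by simpa using ht_shift 0 n
    exact le_trans (le_trans h1 (hit n (t 0) (htnn 0)).1) ht0r
  have hgeom : ∀ s q, t (s + q * m₀) ≤ σ ^ q * t s := by
    intro s q
    induction q with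
    | zero => simp
    | succ q ih =>
      have h1 : t (s + (q+1) * m₀) ≤ k^[m₀] (t (s + q * m₀)) := by
        have h := ht_shift (s + q * m₀) m₀
        rw [show s + (q+1)*m₀ = s + q*m₀ + m₀ by ring]
        exact h
      have h2 := hiter _ (htnn (s + q*m₀))
      have h3 : σ * t (s + q*m₀) ≤ σ * (σ^q * t s) :=
        mul_le_mul_of_nonneg_left ih hσ0.le
      calc t (s + (q+1)*m₀) ≤ σ * t (s+q*m₀) := le_trans h1 h2
        _ ≤ σ * (σ^q * t s) := h3
        _ = σ^(q+1) * t s := by ring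
  have hm₀pos : 0 < m₀ := hm₀
  have htbound : ∀ n, t n ≤ σ ^ (n / m₀) * r := by
    intro n
    have h1 : n % m₀ + n / m₀ * m₀ = n := Nat.mod_add_div' n m₀
    have h2 := hgeom (n % m₀) (n / m₀)
    rw [h1] at h2
    exact le_trans h2 (mul_le_mul_of_nonneg_left (htnr _) (pow_nonneg hσ0.le _))
  -- summability of the geometric majorant
  set ρ : ℝ := σ ^ ((m₀:ℝ)⁻¹) with hρdef
  have hm₀R : (0:ℝ) < (m₀:ℝ) := by exact_mod_cast hm₀pos
  have hρ0 : 0 < ρ := Real.rpow_pos_of_pos hσ0 _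
  have hρ1 : ρ < 1 := Real.rpow_lt_one hσ0.le hσ1 (by positivity)
  have hpow : ∀ n : ℕ, σ ^ (n / m₀) ≤ σ⁻¹ * ρ ^ n := by
    intro n
    have hdm := Nat.div_add_mod n m₀
    have hmod := Nat.mod_lt n hm₀pos
    have hlt : (n:ℝ) < (((n / m₀ : ℕ):ℝ) + 1) * (m₀:ℝ) := by
      have h1 : ((m₀:ℕ):ℝ) * ((n / m₀ : ℕ):ℝ) + ((n % m₀ : ℕ):ℝ) = (n:ℝ) := by
        exact_mod_cast hdm
      have h2 : ((n % m₀ : ℕ):ℝ) < (m₀:ℝ) := by exact_mod_cast hmod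
      nlinarith
    have h2 : (n:ℝ)/(m₀:ℝ) - 1 ≤ ((n/m₀ : ℕ):ℝ) := by
      rw [sub_le_iff_le_add, div_le_iff₀ hm₀R]
      nlinarith
    have h4 : σ ^ ((((n/m₀:ℕ)):ℝ)) ≤ σ ^ ((n:ℝ)/(m₀:ℝ) - 1) :=
      Real.rpow_le_rpow_of_exponent_ge hσ0 hσ1.le h2
    have h5 : σ ^ ((n:ℝ)/(m₀:ℝ) - 1) = σ⁻¹ * ρ ^ n := by
      have hρn : (ρ : ℝ) ^ n = σ ^ ((n:ℝ)/(m₀:ℝ)) := by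
        rw [hρdef, ← Real.rpow_natCast (σ ^ ((m₀:ℝ)⁻¹)) n, ← Real.rpow_mul hσ0.le]
        congr 1
        field_simp
      rw [Real.rpow_sub hσ0, Real.rpow_one, hρn]
      rw [div_eq_mul_inv]
      ring
    calc σ ^ (n / m₀) = σ ^ ((((n/m₀:ℕ)):ℝ)) := (Real.rpow_natCast σ _).symm
      _ ≤ σ ^ ((n:ℝ)/(m₀:ℝ) - 1) := h4
      _ = σ⁻¹ * ρ ^ n := h5
  have hsummable : Summable (fun n : ℕ => σ ^ (n / m₀) * r) := by
    refine Summable.of_nonneg_of_le (fun n => by positivity) (fun n => ?_)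
      ((summable_geometric_of_lt_one hρ0.le hρ1).mul_left (σ⁻¹ * r))
    have h := hpow n
    have : σ ^ (n / m₀) * r ≤ (σ⁻¹ * ρ ^ n) * r := mul_le_mul_of_nonneg_right h hr.le
    calc σ ^ (n / m₀) * r ≤ (σ⁻¹ * ρ ^ n) * r := this
      _ = σ⁻¹ * r * ρ ^ n := by ring
  have hcauchy : CauchySeq (fun n => f₀ (xs n)) := by
    refine cauchySeq_of_dist_le_of_summable (fun n => σ ^ (n / m₀) * r) (fun n => ?_) hsummable
    rw [dist_eq_norm, norm_sub_rev]
    exact le_trans (le_of_eq rfl) (htbound n)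
  obtain ⟨z, hz⟩ := cauchySeq_tendsto_of_complete hcauchy
  have hzball : ‖z - f₀ x₀‖ ≤ r := by
    have hclosed : IsClosed (closedBall (f₀ x₀) r) := isClosed_closedBall
    have hmem : ∀ n, f₀ (xs n) ∈ closedBall (f₀ x₀) r :=
      fun n => mem_closedBall_iff_norm.mpr (hinvar n).2
    exact mem_closedBall_iff_norm.mp
      (hclosed.mem_of_tendsto hz (Filter.Eventually.of_forall hmem))
  obtain ⟨xstar, hxstarV, hxstar⟩ := hpre z hzball
  -- f (xs n) → y
  have hz' : Filter.Tendsto (fun n => f₀ (xs (n+1))) Filter.atTop (nhds z) :=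
    hz.comp (Filter.tendsto_add_atTop_nat 1)
  have hfy : Filter.Tendsto (fun n => f (xs n)) Filter.atTop (nhds y) := by
    have heq' : ∀ n, f (xs n) = y - f₀ (xs (n+1)) + f₀ (xs n) := by
      intro n; rw [heq n]; abel
    have h : Filter.Tendsto (fun n => y - f₀ (xs (n+1)) + f₀ (xs n)) Filter.atTop
        (nhds (y - z + z)) :=
      (Filter.Tendsto.sub (tendsto_const_nhds (x := y)) hz').add hz
    have h2 : y - z + z = y := by abel
    rw [h2] at h
    exact h.congr (fun n => (heq' n).symm)
  -- f (xs n) → f xstar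
  have hg0 : Filter.Tendsto (fun n => ‖f₀ (xs n) - z‖) Filter.atTop (nhds 0) := by
    rw [← tendsto_iff_norm_sub_tendsto_zero]
    exact hz
  have hkg0 : Filter.Tendsto (fun n => k ‖f₀ (xs n) - z‖) Filter.atTop (nhds 0) := by
    have := (hkc.tendsto 0).comp hg0
    rwa [hk0] at this
  have hfx : Filter.Tendsto (fun n => f (xs n)) Filter.atTop (nhds (f xstar)) := by
    rw [tendsto_iff_norm_sub_tendsto_zero]
    have hb : ∀ n, ‖f (xs n) - f xstar‖ ≤ k ‖f₀ (xs n) - z‖ + ‖f₀ (xs n) - z‖ := by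
      intro n
      have h1 := hcompare (xs n) (hinvar n).1 xstar hxstarV
      rw [hxstar] at h1
      have h2 : f (xs n) - f xstar
          = (f (xs n) - f xstar - f₀ (xs n) + z) + (f₀ (xs n) - z) := by abel
      calc ‖f (xs n) - f xstar‖
          = ‖(f (xs n) - f xstar - f₀ (xs n) + z) + (f₀ (xs n) - z)‖ := by
            conv_lhs => rw [h2]
        _ ≤ ‖f (xs n) - f xstar - f₀ (xs n) + z‖ + ‖f₀ (xs n) - z‖ := norm_add_le _ _
        _ ≤ k ‖f₀ (xs n) - z‖ + ‖f₀ (xs n) - z‖ := by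
            exact add_le_add h1 (le_refl _)
    have hlim : Filter.Tendsto (fun n => k ‖f₀ (xs n) - z‖ + ‖f₀ (xs n) - z‖)
        Filter.atTop (nhds 0) := by
      have := hkg0.add hg0
      simpa using this
    exact squeeze_zero (fun n => norm_nonneg _) hb hlim
  exact ⟨xstar, hxstarV, tendsto_nhds_unique hfx hfy⟩
end

section
/- Let ρ, σ ≥ 1 with σ ≥ ρ, let c₀ ≥ 0 and c₁ > 0, and define φ : [0, ∞) → [0, ∞) by φ(τ) = c₀ τ^ρ (τ^σ + c₁)^{−1}. Then φ is continuous and bounded on [0, ∞), and there exists a number μ ≥ 0 such that |φ(t) − φ(s)| · t ≤ (μ + φ(t)) · |t − s| for all t, s ≥ 0 (i.e. φ satisfies the structural condition 11 of the modified Navier–Stokes problem). -/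
open Set Real

/-- The viscosity coefficient `φ(τ) = c₀ τ^ρ (τ^σ + c₁)⁻¹` proposed as an example in the
modified Navier–Stokes problem. -/
noncomputable def phiNS (c₀ c₁ ρ σ : ℝ) (τ : ℝ) : ℝ :=
  c₀ * τ ^ ρ / (τ ^ σ + c₁)

lemma phiNS_denom_pos (σ c₁ : ℝ) (hc₁ : 0 < c₁) {τ : ℝ} (hτ : 0 ≤ τ) :
    0 < τ ^ σ + c₁ := by
  have := Real.rpow_nonneg hτ σ; linarith

lemma phiNS_nonneg' (ρ σ c₀ c₁ : ℝ) (hc₀ : 0 ≤ c₀) (hc₁ : 0 < c₁) {τ : ℝ} (hτ : 0 ≤ τ) :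
    0 ≤ phiNS c₀ c₁ ρ σ τ :=
  div_nonneg (mul_nonneg hc₀ (Real.rpow_nonneg hτ ρ)) (phiNS_denom_pos σ c₁ hc₁ hτ).le

/-- The basic bound `τ^ρ / (τ^σ + c₁) ≤ max c₁⁻¹ 1`. -/
lemma phiNS_gbound (ρ σ c₁ : ℝ) (hρ : 1 ≤ ρ) (hρσ : ρ ≤ σ) (hc₁ : 0 < c₁)
    {τ : ℝ} (hτ : 0 ≤ τ) : τ ^ ρ / (τ ^ σ + c₁) ≤ max c₁⁻¹ 1 := by
  have hpos := phiNS_denom_pos σ c₁ hc₁ hτ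
  rw [div_le_iff₀ hpos]
  have hσ0 : (0:ℝ) ≤ τ ^ σ := Real.rpow_nonneg hτ σ
  rcases le_total τ 1 with h | h
  · have h1 : τ ^ ρ ≤ 1 := Real.rpow_le_one hτ h (by linarith)
    have hinv : 0 < c₁⁻¹ := inv_pos.mpr hc₁
    have h2 : (1:ℝ) ≤ c₁⁻¹ * (τ ^ σ + c₁) := by
      have : c₁⁻¹ * c₁ = 1 := inv_mul_cancel₀ hc₁.ne'
      nlinarith
    calc τ ^ ρ ≤ 1 := h1
      _ ≤ c₁⁻¹ * (τ ^ σ + c₁) := h2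
      _ ≤ max c₁⁻¹ 1 * (τ ^ σ + c₁) :=
          mul_le_mul_of_nonneg_right (le_max_left _ _) hpos.le
  · have h1 : τ ^ ρ ≤ τ ^ σ := Real.rpow_le_rpow_of_exponent_le h hρσ
    calc τ ^ ρ ≤ τ ^ σ := h1
      _ ≤ 1 * (τ ^ σ + c₁) := by linarith
      _ ≤ max c₁⁻¹ 1 * (τ ^ σ + c₁) :=
          mul_le_mul_of_nonneg_right (le_max_right _ _) hpos.le

lemma phiNS_le (ρ σ c₀ c₁ : ℝ) (hρ : 1 ≤ ρ) (hρσ : ρ ≤ σ) (hc₀ : 0 ≤ c₀) (hc₁ : 0 < c₁)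
    {τ : ℝ} (hτ : 0 ≤ τ) : phiNS c₀ c₁ ρ σ τ ≤ c₀ * max c₁⁻¹ 1 := by
  have := phiNS_gbound ρ σ c₁ hρ hρσ hc₁ hτ
  have h2 : phiNS c₀ c₁ ρ σ τ = c₀ * (τ ^ ρ / (τ ^ σ + c₁)) := by
    unfold phiNS; ring
  rw [h2]
  exact mul_le_mul_of_nonneg_left this hc₀

/-- Derivative and derivative bound for `phiNS` at positive points. -/
lemma phiNS_deriv_bound (ρ σ c₀ c₁ : ℝ) (hρ : 1 ≤ ρ) (hσ : 1 ≤ σ) (hρσ : ρ ≤ σ)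
    (hc₀ : 0 ≤ c₀) (hc₁ : 0 < c₁) {ξ : ℝ} (hξ : 0 < ξ) :
    ∃ d : ℝ, HasDerivAt (phiNS c₀ c₁ ρ σ) d ξ ∧
      |d| ≤ c₀ * (ρ + σ) * max c₁⁻¹ 1 / ξ := by
  have hξ0 : (0:ℝ) ≤ ξ := hξ.le
  have hD : 0 < ξ ^ σ + c₁ := phiNS_denom_pos σ c₁ hc₁ hξ0
  have hd1 : HasDerivAt (fun τ : ℝ => c₀ * τ ^ ρ) (c₀ * (ρ * ξ ^ (ρ - 1))) ξ :=
    (Real.hasDerivAt_rpow_const (Or.inr hρ)).const_mul c₀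
  have hd2 : HasDerivAt (fun τ : ℝ => τ ^ σ + c₁) (σ * ξ ^ (σ - 1)) ξ :=
    (Real.hasDerivAt_rpow_const (Or.inr hσ)).add_const c₁
  have hd := hd1.div hd2 hD.ne'
  refine ⟨_, hd, ?_⟩
  -- bound the numerator
  have hρ1 : (0:ℝ) ≤ ξ ^ (ρ - 1) := Real.rpow_nonneg hξ0 _
  have hσ1 : (0:ℝ) ≤ ξ ^ (σ - 1) := Real.rpow_nonneg hξ0 _
  have hρξ : (0:ℝ) ≤ ξ ^ ρ := Real.rpow_nonneg hξ0 _
  have hσξ : (0:ℝ) ≤ ξ ^ σ := Real.rpow_nonneg hξ0 _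
  have hkey : ξ ^ ρ * ξ ^ (σ - 1) = ξ ^ (ρ - 1) * ξ ^ σ := by
    rw [← Real.rpow_add hξ, ← Real.rpow_add hξ]; ring_nf
  have hterm : c₀ * ξ ^ ρ * (σ * ξ ^ (σ - 1)) = c₀ * σ * (ξ ^ (ρ - 1) * ξ ^ σ) := by
    rw [← hkey]; ring
  have hρ0 : (0:ℝ) ≤ ρ := by linarith
  have hσ0' : (0:ℝ) ≤ σ := by linarith
  have n1 : (0:ℝ) ≤ c₀ * ρ * (ξ ^ (ρ - 1) * ξ ^ σ) :=
    mul_nonneg (mul_nonneg hc₀ hρ0) (mul_nonneg hρ1 hσξ)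
  have n2 : (0:ℝ) ≤ c₀ * ρ * (ξ ^ (ρ - 1) * c₁) :=
    mul_nonneg (mul_nonneg hc₀ hρ0) (mul_nonneg hρ1 hc₁.le)
  have n3 : (0:ℝ) ≤ c₀ * σ * (ξ ^ (ρ - 1) * ξ ^ σ) :=
    mul_nonneg (mul_nonneg hc₀ hσ0') (mul_nonneg hρ1 hσξ)
  have n4 : (0:ℝ) ≤ c₀ * σ * (ξ ^ (ρ - 1) * c₁) :=
    mul_nonneg (mul_nonneg hc₀ hσ0') (mul_nonneg hρ1 hc₁.le)
  have hnum : |c₀ * (ρ * ξ ^ (ρ - 1)) * (ξ ^ σ + c₁) - c₀ * ξ ^ ρ * (σ * ξ ^ (σ - 1))|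
      ≤ c₀ * (ρ + σ) * ξ ^ (ρ - 1) * (ξ ^ σ + c₁) := by
    rw [hterm, abs_le]
    constructor <;> nlinarith [n1, n2, n3, n4]
  have habs : |(c₀ * (ρ * ξ ^ (ρ - 1)) * (ξ ^ σ + c₁) - c₀ * ξ ^ ρ * (σ * ξ ^ (σ - 1)))
      / (ξ ^ σ + c₁) ^ 2|
      ≤ c₀ * (ρ + σ) * ξ ^ (ρ - 1) / (ξ ^ σ + c₁) := by
    rw [abs_div, abs_of_pos (by positivity : (0:ℝ) < (ξ ^ σ + c₁) ^ 2)]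
    rw [div_le_div_iff₀ (by positivity) hD]
    calc |c₀ * (ρ * ξ ^ (ρ - 1)) * (ξ ^ σ + c₁) - c₀ * ξ ^ ρ * (σ * ξ ^ (σ - 1))|
          * (ξ ^ σ + c₁)
        ≤ (c₀ * (ρ + σ) * ξ ^ (ρ - 1) * (ξ ^ σ + c₁)) * (ξ ^ σ + c₁) :=
          mul_le_mul_of_nonneg_right hnum hD.le
      _ = c₀ * (ρ + σ) * ξ ^ (ρ - 1) * (ξ ^ σ + c₁) ^ 2 := by ring
  refine habs.trans ?_
  -- ξ ^ (ρ-1) / (ξ^σ + c₁) = (ξ^ρ / (ξ^σ+c₁)) / ξ ≤ max c₁⁻¹ 1 / ξ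
  have hsplit : ξ ^ (ρ - 1) = ξ ^ ρ / ξ := by
    rw [eq_div_iff hξ.ne', ← Real.rpow_add_one hξ.ne', sub_add_cancel]
  have hgb := phiNS_gbound ρ σ c₁ hρ hρσ hc₁ hξ0
  have hρσ0 : (0:ℝ) ≤ ρ + σ := by linarith
  have heq : c₀ * (ρ + σ) * ξ ^ (ρ - 1) / (ξ ^ σ + c₁)
      = c₀ * (ρ + σ) * (ξ ^ ρ / (ξ ^ σ + c₁)) / ξ := by
    rw [hsplit]; ring
  rw [heq]
  gcongr

/-- The function `φ(τ) = c₀ τ^ρ (τ^σ + c₁)⁻¹` with `σ ≥ ρ ≥ 1`, `c₀ ≥ 0`, `c₁ > 0` is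
continuous and bounded on `[0, ∞)` and satisfies the structural condition 11 of the modified
Navier–Stokes problem: there is `μ ≥ 0` with
`|φ(t) − φ(s)|·t ≤ (μ + φ(t))·|t − s|` for all `t, s ≥ 0`. -/
theorem phiNS_continuous_bounded_and_structural_condition
    (ρ σ c₀ c₁ : ℝ) (hρ : 1 ≤ ρ) (hσ : 1 ≤ σ) (hρσ : ρ ≤ σ)
    (hc₀ : 0 ≤ c₀) (hc₁ : 0 < c₁) :
    ContinuousOn (phiNS c₀ c₁ ρ σ) (Ici 0) ∧
    (∃ C : ℝ, ∀ τ ∈ Ici (0 : ℝ), |phiNS c₀ c₁ ρ σ τ| ≤ C) ∧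
    ∃ μ ≥ (0 : ℝ), ∀ t ∈ Ici (0 : ℝ), ∀ s ∈ Ici (0 : ℝ),
      |phiNS c₀ c₁ ρ σ t - phiNS c₀ c₁ ρ σ s| * t ≤
        (μ + phiNS c₀ c₁ ρ σ t) * |t - s| := by
  set G : ℝ := max c₁⁻¹ 1 with hG
  have hG1 : (0:ℝ) < G := lt_of_lt_of_le one_pos (le_max_right _ _)
  have hbound : ∀ τ ∈ Ici (0:ℝ), |phiNS c₀ c₁ ρ σ τ| ≤ c₀ * G := by
    intro τ hτ
    rw [abs_of_nonneg (phiNS_nonneg' ρ σ c₀ c₁ hc₀ hc₁ hτ)]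
    exact phiNS_le ρ σ c₀ c₁ hρ hρσ hc₀ hc₁ hτ
  refine ⟨?_, ⟨c₀ * G, hbound⟩, ?_⟩
  · -- continuity
    apply ContinuousOn.div
    · apply Continuous.continuousOn
      apply continuous_const.mul
      rw [continuous_iff_continuousAt]
      intro x
      exact Real.continuousAt_rpow_const x ρ (Or.inr (by linarith))
    · apply ContinuousOn.add ?_ continuousOn_const
      apply Continuous.continuousOn
      rw [continuous_iff_continuousAt]
      intro x
      exact Real.continuousAt_rpow_const x σ (Or.inr (by linarith))
    · intro x hx
      exact (phiNS_denom_pos σ c₁ hc₁ hx).ne'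
  · -- structural condition
    refine ⟨c₀ * (2 * (ρ + σ) + 4) * G, by positivity, ?_⟩
    intro t ht s hs
    have hφt : 0 ≤ phiNS c₀ c₁ ρ σ t := phiNS_nonneg' ρ σ c₀ c₁ hc₀ hc₁ ht
    have habs : (0:ℝ) ≤ |t - s| := abs_nonneg _
    have hmain : |phiNS c₀ c₁ ρ σ t - phiNS c₀ c₁ ρ σ s| * t
        ≤ c₀ * (2 * (ρ + σ) + 4) * G * |t - s| := by
      rcases le_or_gt t (2 * |t - s|) with hcase | hcase
      · -- far case: use boundedness
        have h1 : |phiNS c₀ c₁ ρ σ t - phiNS c₀ c₁ ρ σ s| ≤ 2 * (c₀ * G) := by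
          calc |phiNS c₀ c₁ ρ σ t - phiNS c₀ c₁ ρ σ s|
              ≤ |phiNS c₀ c₁ ρ σ t| + |phiNS c₀ c₁ ρ σ s| := abs_sub _ _
            _ ≤ 2 * (c₀ * G) := by
                have := hbound t ht; have := hbound s hs; linarith
        have ht0 : (0:ℝ) ≤ t := ht
        calc |phiNS c₀ c₁ ρ σ t - phiNS c₀ c₁ ρ σ s| * t
            ≤ 2 * (c₀ * G) * (2 * |t - s|) :=
              mul_le_mul h1 hcase ht0 (by positivity)
          _ ≤ c₀ * (2 * (ρ + σ) + 4) * G * |t - s| := by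
              nlinarith [mul_nonneg (mul_nonneg hc₀
                (mul_nonneg (by linarith : (0:ℝ) ≤ ρ + σ) hG1.le)) habs]
      · -- near case: mean value inequality on [t/2, ∞)
        have ht2 : 0 < t := lt_of_le_of_lt (by positivity : (0:ℝ) ≤ 2 * |t - s|) hcase
        have hSs : s ∈ Ici (t / 2) := by
          simp only [mem_Ici]
          have h := le_abs_self (t - s)
          linarith
        have hSt : t ∈ Ici (t / 2) := by simp only [mem_Ici]; linarith
        have hC : ∀ x ∈ Ici (t / 2), HasDerivWithinAt (phiNS c₀ c₁ ρ σ)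
            (deriv (phiNS c₀ c₁ ρ σ) x) (Ici (t / 2)) x ∧
            ‖deriv (phiNS c₀ c₁ ρ σ) x‖ ≤ c₀ * (ρ + σ) * G / (t / 2) := by
          intro x hx
          have hx0 : 0 < x := lt_of_lt_of_le (by linarith) hx
          obtain ⟨d, hd, hdb⟩ := phiNS_deriv_bound ρ σ c₀ c₁ hρ hσ hρσ hc₀ hc₁ hx0
          have hdd : deriv (phiNS c₀ c₁ ρ σ) x = d := hd.deriv
          constructor
          · rw [hdd]; exact hd.hasDerivWithinAt
          · rw [hdd, Real.norm_eq_abs]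
            refine hdb.trans ?_
            gcongr
            · exact hx
        have hmvt := Convex.norm_image_sub_le_of_norm_hasDerivWithin_le
          (fun x hx => (hC x hx).1) (fun x hx => (hC x hx).2)
          (convex_Ici _) hSs hSt
        rw [Real.norm_eq_abs, Real.norm_eq_abs] at hmvt
        have hstep : |phiNS c₀ c₁ ρ σ t - phiNS c₀ c₁ ρ σ s| * t
            ≤ (c₀ * (ρ + σ) * G / (t / 2)) * |t - s| * t :=
          mul_le_mul_of_nonneg_right hmvt ht
        refine hstep.trans ?_
        have hCt : (c₀ * (ρ + σ) * G / (t / 2)) * |t - s| * t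
            = 2 * (c₀ * (ρ + σ) * G) * |t - s| := by
          rw [div_mul_eq_mul_div, div_mul_eq_mul_div,
            div_eq_iff (ne_of_gt (by linarith : (0:ℝ) < t / 2))]
          ring
        rw [hCt]
        nlinarith [mul_nonneg (mul_nonneg hc₀ hG1.le) habs]
    calc |phiNS c₀ c₁ ρ σ t - phiNS c₀ c₁ ρ σ s| * t
        ≤ c₀ * (2 * (ρ + σ) + 4) * G * |t - s| := hmain
      _ ≤ (c₀ * (2 * (ρ + σ) + 4) * G + phiNS c₀ c₁ ρ σ t) * |t - s| := by nlinarith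
end
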